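/- If a mechanism M satisfies (α, ρ)-Rényi differential privacy for some α > 1, then for any 0 < δ < 1, M satisfies (ε, δ)-differential privacy with ε = ρ + log((α−1)/α) − (log δ + log α)/(α − 1). -/

import Mathlib

open scoped ENNReal
open MeasureTheory

/-- Rényi divergence of order `α` between two discrete distributions:
`D_α(P‖Q) = (1/(α−1)) log ∑ₓ P(x)^α Q(x)^{1−α}` (valued in `EReal`). -/
noncomputable def renyiDiv {O : Type*} (α : ℝ) (P Q : PMF O) : EReal :=
  (((α - 1)⁻¹ : ℝ) : EReal) * ENNReal.log (∑' x, P x ^ α * Q x ^ (1 - α))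

/-- `(α, ρ)`-Rényi differential privacy. -/
def IsRDP {D O : Type*} (neighbor : D → D → Prop) (M : D → PMF O) (α ρ : ℝ) : Prop :=
  ∀ d d', neighbor d d' → renyiDiv α (M d) (M d') ≤ (ρ : EReal)

/-- `(ε, δ)`-differential privacy for discrete mechanisms. -/
def IsDP {D O : Type*} (neighbor : D → D → Prop) (M : D → PMF O) (ε δ : ℝ) : Prop :=
  ∀ d d', neighbor d d' → ∀ S : Set O,
    (M d).toOuterMeasure S ≤
      ENNReal.ofReal (Real.exp ε) * (M d').toOuterMeasure S + ENNReal.ofReal δ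

/-- Tangent-line bound from weighted AM-GM. -/
lemma RDPtoDP.keyReal {α K Λ x : ℝ} (hα : 1 < α) (hK : 0 < K) (hΛ : 0 < Λ) (hx : 0 ≤ x) :
    K * x ^ ((α-1)/α) ≤ (K * ((α-1)/α) * Λ ^ (1 - (α-1)/α)) * x
      + K * (1 - (α-1)/α) * Λ ^ (-((α-1)/α)) := by
  set c : ℝ := (α-1)/α with hc
  have hα0 : (0:ℝ) < α := lt_trans one_pos hα
  have hc0 : 0 < c := div_pos (by linarith) hα0
  have hc1 : c < 1 := by
    rw [hc, div_lt_one hα0]; linarith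
  have hgm : (Λ * x) ^ c * 1 ^ (1 - c) ≤ c * (Λ * x) + (1 - c) * 1 :=
    Real.geom_mean_le_arith_mean2_weighted hc0.le (by linarith)
      (mul_nonneg hΛ.le hx) zero_le_one (by ring)
  rw [Real.one_rpow, mul_one, mul_one] at hgm
  have hΛx : (Λ * x) ^ c = Λ ^ c * x ^ c := Real.mul_rpow hΛ.le hx
  have h1 : K * x ^ c = (K * Λ ^ (-c)) * ((Λ * x) ^ c) := by
    have : Λ ^ (-c) * Λ ^ c = 1 := by
      rw [← Real.rpow_add hΛ, show (-c + c : ℝ) = 0 by ring, Real.rpow_zero]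
    calc K * x ^ c = (Λ ^ (-c) * Λ ^ c) * (K * x ^ c) := by rw [this]; ring
      _ = K * Λ ^ (-c) * (Λ ^ c * x ^ c) := by ring
      _ = K * Λ ^ (-c) * (Λ * x) ^ c := by rw [hΛx]
  have hKL : 0 < K * Λ ^ (-c) := mul_pos hK (Real.rpow_pos_of_pos hΛ _)
  calc K * x ^ c = (K * Λ ^ (-c)) * ((Λ * x) ^ c) := h1
    _ ≤ (K * Λ ^ (-c)) * (c * (Λ * x) + (1 - c)) := by
        exact mul_le_mul_of_nonneg_left hgm hKL.le
    _ = (K * c * (Λ ^ (-c) * Λ)) * x + K * (1 - c) * Λ ^ (-c) := by ring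
    _ = (K * c * Λ ^ (1 - c)) * x + K * (1 - c) * Λ ^ (-c) := by
        rw [show Λ ^ (-c) * Λ = Λ ^ (1 - c) by
          rw [show (1 - c : ℝ) = -c + 1 by ring, Real.rpow_add hΛ, Real.rpow_one]]

/-- The key real inequality behind the RDP-to-DP conversion. -/
lemma RDPtoDP.keyReal2 {α ρ δ x : ℝ} (hα : 1 < α) (hδ0 : 0 < δ) (hx : 0 ≤ x) :
    Real.exp (((α-1)/α) * ρ) * x ^ ((α-1)/α) ≤
      Real.exp (ρ + Real.log ((α - 1) / α) - (Real.log δ + Real.log α) / (α - 1)) * x + δ := by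
  have hα0 : (0:ℝ) < α := lt_trans one_pos hα
  have hα1 : (0:ℝ) < α - 1 := by linarith
  set c : ℝ := (α-1)/α with hc
  have hc0 : 0 < c := div_pos hα1 hα0
  have hc1 : c < 1 := by rw [hc, div_lt_one hα0]; linarith
  have h1c : 1 - c = α⁻¹ := by rw [hc]; field_simp; ring
  have h1c0 : 0 < 1 - c := by linarith
  set K : ℝ := Real.exp (c * ρ) with hK
  have hK0 : 0 < K := Real.exp_pos _
  set Λ : ℝ := (K * (1 - c) / δ) ^ (c⁻¹) with hΛdef
  have hbase : 0 < K * (1 - c) / δ := div_pos (mul_pos hK0 h1c0) hδ0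
  have hΛ0 : 0 < Λ := Real.rpow_pos_of_pos hbase _
  have key : K * x ^ c ≤ (K * c * Λ ^ (1 - c)) * x + K * (1 - c) * Λ ^ (-c) :=
    RDPtoDP.keyReal hα hK0 hΛ0 hx
  have hI : K * (1 - c) * Λ ^ (-c) = δ := by
    have : Λ ^ (-c) = (K * (1 - c) / δ)⁻¹ := by
      rw [hΛdef, ← Real.rpow_mul hbase.le,
        show c⁻¹ * (-c) = (-1:ℝ) by field_simp, Real.rpow_neg_one]
    rw [this]
    field_simp
  have hII : K * c * Λ ^ (1 - c) =
      Real.exp (ρ + Real.log ((α - 1) / α) - (Real.log δ + Real.log α) / (α - 1)) := by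
    have hpos : 0 < K * c * Λ ^ (1 - c) :=
      mul_pos (mul_pos hK0 hc0) (Real.rpow_pos_of_pos hΛ0 _)
    rw [← Real.exp_log hpos]
    congr 1
    have hlogΛ : Real.log Λ = c⁻¹ * (c * ρ + Real.log (1 - c) - Real.log δ) := by
      rw [hΛdef, Real.log_rpow hbase]
      congr 1
      rw [Real.log_div (by positivity) (ne_of_gt hδ0), Real.log_mul (ne_of_gt hK0) (ne_of_gt h1c0),
        hK, Real.log_exp]
      try ring
    rw [Real.log_mul (by positivity) (by positivity), Real.log_mul (ne_of_gt hK0) (ne_of_gt hc0),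
      Real.log_rpow hΛ0, hlogΛ, hK, Real.log_exp, h1c, Real.log_inv, ← hc]
    have hcc : c ≠ 0 := ne_of_gt hc0
    rw [hc]
    try field_simp
    try ring
  calc Real.exp (c * ρ) * x ^ c = K * x ^ c := by rw [hK]
    _ ≤ (K * c * Λ ^ (1 - c)) * x + K * (1 - c) * Λ ^ (-c) := key
    _ = _ := by rw [hI, hII]

/-- RDP-to-approximate-DP conversion (Balle et al. 2019): if `M` is `(α, ρ)`-RDP with
`α > 1`, then for any `0 < δ < 1`, `M` is `(ε, δ)`-DP with
`ε = ρ + log((α−1)/α) − (log δ + log α)/(α−1)`. -/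
theorem RDP_to_DP {D O : Type*} (neighbor : D → D → Prop) (M : D → PMF O)
    (α ρ δ : ℝ) (hα : 1 < α) (hδ0 : 0 < δ) (hδ1 : δ < 1)
    (hM : IsRDP neighbor M α ρ) :
    IsDP neighbor M
      (ρ + Real.log ((α - 1) / α) - (Real.log δ + Real.log α) / (α - 1)) δ := by
  intro d d' hn S
  classical
  letI : MeasurableSpace O := ⊤
  haveI : MeasurableSingletonClass O := ⟨fun _ => trivial⟩
  set P : PMF O := M d with hP
  set Q : PMF O := M d' with hQ
  have hα0 : (0:ℝ) < α := lt_trans one_pos hα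
  have hα1 : (0:ℝ) < α - 1 := by linarith
  set T := ∑' x, P x ^ α * Q x ^ (1 - α) with hT
  -- Step 1: bound the Rényi sum
  have hRD : (((α - 1)⁻¹ : ℝ) : EReal) * ENNReal.log T ≤ (ρ : EReal) := hM d d' hn
  have hTle : T ≤ ENNReal.ofReal (Real.exp ((α-1)*ρ)) := by
    have hlog : ENNReal.log T ≤ (((α-1)*ρ : ℝ) : EReal) := by
      generalize hgen : ENNReal.log T = L at hRD ⊢
      induction L using EReal.rec with
      | bot => exact bot_le
      | coe r =>
          rw [← EReal.coe_mul, EReal.coe_le_coe_iff] at hRD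
          rw [EReal.coe_le_coe_iff]
          have := mul_le_mul_of_nonneg_left hRD hα1.le
          rw [mul_comm (α-1) ((α-1)⁻¹ * r)] at this
          calc r = (α-1)⁻¹ * r * (α-1) := by field_simp
            _ ≤ (α-1)*ρ := this
      | top =>
          rw [EReal.mul_top_of_pos (by exact_mod_cast inv_pos.mpr hα1)] at hRD
          exact absurd (top_le_iff.mp hRD) (by simp)
    have := EReal.exp_monotone hlog
    rwa [ENNReal.exp_log, EReal.exp_coe] at this
  have hTne : T ≠ ⊤ := ne_top_of_le_ne_top ENNReal.ofReal_ne_top hTle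
  -- absolute continuity on points
  have hPQ : ∀ x, Q x = 0 → P x = 0 := by
    intro x hq
    by_contra hp
    have hterm : P x ^ α * Q x ^ (1 - α) = ⊤ := by
      rw [hq, ENNReal.zero_rpow_of_neg (by linarith), ENNReal.mul_top]
      simp only [ne_eq, ENNReal.rpow_eq_zero_iff, not_or, not_and]
      exact ⟨fun h => absurd h hp, fun h => absurd h (P.apply_ne_top x)⟩
    exact hTne (top_le_iff.mp (hterm ▸ ENNReal.le_tsum x))
  -- Step 2: Hölder's inequality
  have hHolder : P.toOuterMeasure S ≤ T ^ α⁻¹ * (Q.toOuterMeasure S) ^ ((α-1)/α) := by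
    have hpq : Real.HolderConjugate α (α/(α-1)) :=
      (Real.holderConjugate_iff_eq_conjExponent hα).2 rfl
    set f : O → ℝ≥0∞ := S.indicator (fun x => (P x ^ α * Q x ^ (1-α)) ^ α⁻¹) with hf
    set g : O → ℝ≥0∞ := S.indicator (fun x => Q x ^ ((α-1)/α)) with hg
    have hH := ENNReal.lintegral_mul_le_Lp_mul_Lq (Measure.count : Measure O) hpq
      (measurable_from_top (f := f)).aemeasurable (measurable_from_top (f := g)).aemeasurable
    rw [lintegral_count, lintegral_count, lintegral_count] at hH
    have hfg : ∀ x, (f * g) x = S.indicator (⇑P) x := by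
      intro x
      by_cases hx : x ∈ S
      · simp only [Pi.mul_apply, hf, hg, Set.indicator_of_mem hx]
        by_cases hq : Q x = 0
        · rw [hPQ x hq, ENNReal.zero_rpow_of_pos hα0, zero_mul,
            ENNReal.zero_rpow_of_pos (by positivity), zero_mul]
        · have hqt : Q x ≠ ⊤ := Q.apply_ne_top x
          have hq1t : Q x ^ (1-α) ≠ ⊤ := by
            intro h
            rw [ENNReal.rpow_eq_top_iff] at h
            rcases h with ⟨h1, _⟩ | ⟨h1, _⟩
            exacts [hq h1, hqt h1]
          rw [ENNReal.mul_rpow_of_ne_top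
              (ENNReal.rpow_ne_top_of_nonneg hα0.le (P.apply_ne_top x)) hq1t,
            ← ENNReal.rpow_mul, ← ENNReal.rpow_mul, mul_inv_cancel₀ (ne_of_gt hα0),
            ENNReal.rpow_one, mul_assoc, ← ENNReal.rpow_add _ _ hq hqt,
            show (1-α)*α⁻¹ + (α-1)/α = 0 by field_simp; ring, ENNReal.rpow_zero, mul_one]
      · simp [hf, hg, Set.indicator_of_notMem hx]
    have hsum_fg : ∑' x, (f * g) x = P.toOuterMeasure S := by
      rw [tsum_congr hfg, P.toOuterMeasure_apply]
    have hsum_f : ∑' x, f x ^ α ≤ T := by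
      rw [hT]
      refine ENNReal.tsum_le_tsum fun x => ?_
      by_cases hx : x ∈ S
      · rw [hf, Set.indicator_of_mem hx, ← ENNReal.rpow_mul,
          inv_mul_cancel₀ (ne_of_gt hα0), ENNReal.rpow_one]
      · rw [hf, Set.indicator_of_notMem hx, ENNReal.zero_rpow_of_pos hα0]
        exact zero_le
    have hsum_g : ∑' x, g x ^ (α/(α-1)) = Q.toOuterMeasure S := by
      rw [Q.toOuterMeasure_apply]
      refine tsum_congr fun x => ?_
      by_cases hx : x ∈ S
      · rw [hg, Set.indicator_of_mem hx, Set.indicator_of_mem hx, ← ENNReal.rpow_mul,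
          show (α-1)/α * (α/(α-1)) = 1 by field_simp, ENNReal.rpow_one]
      · rw [hg, Set.indicator_of_notMem hx, Set.indicator_of_notMem hx,
          ENNReal.zero_rpow_of_pos (by positivity)]
    calc P.toOuterMeasure S = ∑' x, (f * g) x := hsum_fg.symm
      _ ≤ (∑' x, f x ^ α) ^ (1/α) * (∑' x, g x ^ (α/(α-1))) ^ (1/(α/(α-1))) := hH
      _ ≤ T ^ α⁻¹ * (Q.toOuterMeasure S) ^ ((α-1)/α) := by
          rw [hsum_g, show (1/(α/(α-1))) = (α-1)/α by field_simp, one_div]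
          exact mul_le_mul_left (ENNReal.rpow_le_rpow hsum_f (by positivity)) _
  -- Step 3: conclude
  set q : ℝ≥0∞ := Q.toOuterMeasure S with hq
  have hqne : q ≠ ⊤ := by
    refine ne_top_of_le_ne_top ENNReal.one_ne_top ?_
    rw [hq, Q.toOuterMeasure_apply]
    calc ∑' x, S.indicator (⇑Q) x ≤ ∑' x, Q x :=
          ENNReal.tsum_le_tsum fun x => Set.indicator_le_self _ _ x
      _ = 1 := Q.tsum_coe
  set qr : ℝ := q.toReal with hqr
  have hqr0 : 0 ≤ qr := ENNReal.toReal_nonneg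
  have hTpow : T ^ α⁻¹ ≤ ENNReal.ofReal (Real.exp (((α-1)/α) * ρ)) := by
    calc T ^ α⁻¹ ≤ (ENNReal.ofReal (Real.exp ((α-1)*ρ))) ^ α⁻¹ :=
          ENNReal.rpow_le_rpow hTle (by positivity)
      _ = ENNReal.ofReal (Real.exp ((α-1)*ρ) ^ α⁻¹) :=
          ENNReal.ofReal_rpow_of_pos (Real.exp_pos _)
      _ = ENNReal.ofReal (Real.exp (((α-1)/α) * ρ)) := by
          rw [← Real.exp_mul]
          congr 2
          field_simp
          try ring
  have hqpow : q ^ ((α-1)/α) = ENNReal.ofReal (qr ^ ((α-1)/α)) := by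
    conv_lhs => rw [← ENNReal.ofReal_toReal hqne]
    rw [ENNReal.ofReal_rpow_of_nonneg hqr0 (by positivity)]
  calc P.toOuterMeasure S ≤ T ^ α⁻¹ * q ^ ((α-1)/α) := hHolder
    _ ≤ ENNReal.ofReal (Real.exp (((α-1)/α) * ρ)) * ENNReal.ofReal (qr ^ ((α-1)/α)) := by
        rw [hqpow]
        exact mul_le_mul_left hTpow _
    _ = ENNReal.ofReal (Real.exp (((α-1)/α) * ρ) * qr ^ ((α-1)/α)) :=
        (ENNReal.ofReal_mul (Real.exp_pos _).le).symm
    _ ≤ ENNReal.ofReal (Real.exp (ρ + Real.log ((α - 1) / α)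
          - (Real.log δ + Real.log α) / (α - 1)) * qr + δ) :=
        ENNReal.ofReal_le_ofReal (RDPtoDP.keyReal2 hα hδ0 hqr0)
    _ = ENNReal.ofReal (Real.exp (ρ + Real.log ((α - 1) / α)
          - (Real.log δ + Real.log α) / (α - 1))) * q + ENNReal.ofReal δ := by
        rw [ENNReal.ofReal_add (by positivity) hδ0.le,
          ENNReal.ofReal_mul (Real.exp_pos _).le, hqr, ENNReal.ofReal_toReal hqne]
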